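/- Let p : ℝ^d → ℝ^m and q : ℝ^m → ℝ^s be polynomial maps with p(0) = 0 and q(0) = 0, where q is given by polynomials q₁,…,q_s. Then for every i = 1,…,s, M_p(φ_m(q_i)) = φ_d(q_i ∘ p). -/

import Mathlib

noncomputable section

open MeasureTheory

/-- Words in the alphabet `{1,…,d}`. -/
abbrev Word (d : ℕ) := List (Fin d)

/-- `T(ℝ^d)`: the real vector space with basis the words in `{1,…,d}`. -/
abbrev Tens (d : ℕ) := Word d →₀ ℝ

namespace SigPaper

variable {d m s : ℕ}

/-- The basis word `w` as an element of `T(ℝ^d)`. -/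
def wordT (w : Word d) : Tens d := Finsupp.single w 1

/-- The shuffle product of two words. -/
def shuffleWord : Word d → Word d → Tens d
  | [], v => Finsupp.single v 1
  | u, [] => Finsupp.single u 1
  | a :: u, b :: v =>
      Finsupp.mapDomain (fun w => a :: w) (shuffleWord u (b :: v)) +
      Finsupp.mapDomain (fun w => b :: w) (shuffleWord (a :: u) v)
  termination_by u v => u.length + v.length
  decreasing_by all_goals simp +arith +decide

/-- The shuffle product `⧢` on `T(ℝ^d)`, the bilinear extension of the shuffle of words. -/
def shuffle (x y : Tens d) : Tens d :=
  x.sum fun u a => y.sum fun v b => (a * b) • shuffleWord u v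

/-- The operator appending the letter `i` at the end of every word (`T_i^+`). -/
def appendLetter (i : Fin d) (x : Tens d) : Tens d :=
  Finsupp.mapDomain (fun w => w ++ [i]) x

/-- The right half-shuffle of two words: `w ≻ (v∘i) = (w ⧢ v)∘i` (zero if the right word
is empty). -/
def halfShuffleWord (u v : Word d) : Tens d :=
  match v.getLast? with
  | none => 0
  | some i => appendLetter i (shuffleWord u v.dropLast)

/-- The right half-shuffle `≻`, extended bilinearly. -/
def halfShuffle (x y : Tens d) : Tens d :=
  x.sum fun u a => y.sum fun v b => (a * b) • halfShuffleWord u v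

/-- The letter-appending operator `T_i^+`. -/
def Tplus (i : Fin d) : Tens d → Tens d := appendLetter i

/-- `T_i^-` on a word: removes the last letter if it equals `i`, otherwise `0`. -/
def TminusWord (i : Fin d) (w : Word d) : Tens d :=
  match w.getLast? with
  | none => 0
  | some j => if j = i then Finsupp.single w.dropLast 1 else 0

/-- The letter-removing operator `T_i^-`. -/
def Tminus (i : Fin d) (x : Tens d) : Tens d := x.sum fun w a => a • TminusWord i w

/-- The single-letter word `i` in `T(ℝ^d)`. -/
def letterT (i : Fin d) : Tens d := Finsupp.single [i] 1

/-- Shuffle powers `x^{⧢ n}`. -/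
def shufflePow (x : Tens d) : ℕ → Tens d
  | 0 => Finsupp.single [] 1
  | n + 1 => shuffle (shufflePow x n) x

/-- Shuffle product of a list of elements. -/
def shuffleList : List (Tens d) → Tens d
  | [] => Finsupp.single [] 1
  | x :: xs => shuffle x (shuffleList xs)

/-- Image of the monomial `x^t` under `φ_d`: the shuffle product of its letters. -/
def phiMon (t : Fin d →₀ ℕ) : Tens d :=
  shuffleList ((List.finRange d).map fun i => shufflePow (letterT i) (t i))

/-- The embedding `φ_d : ℝ[x₁,…,x_d] → (T(ℝ^d), ⧢)` sending the monomial
`x_{i₁}⋯x_{i_l}` to `i₁ ⧢ ⋯ ⧢ i_l`. -/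
def phi (f : MvPolynomial (Fin d) ℝ) : Tens d :=
  f.support.sum fun t => f.coeff t • phiMon t

/-- A polynomial map `p : ℝ^d → ℝ^m`, given by `m` polynomials in `d` variables. -/
abbrev PolyMap (d m : ℕ) := Fin m → MvPolynomial (Fin d) ℝ

/-- `k_p^{ij} = φ_d(∂p_i/∂x_j) ∈ T(ℝ^d)`. -/
def kP (p : PolyMap d m) (i : Fin m) (j : Fin d) : Tens d :=
  phi (MvPolynomial.pderiv j (p i))

/-- Auxiliary: `M_p` on reversed words, so that `M_p(e) = e` and
`M_p(w∘i) = Σ_j (M_p(w) ⧢ k_p^{ij})∘j`. -/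
def MpRev (p : PolyMap d m) : List (Fin m) → Tens d
  | [] => Finsupp.single [] 1
  | i :: w => ∑ j : Fin d, appendLetter j (shuffle (MpRev p w) (kP p i j))

/-- `M_p` on a word. -/
def MpWord (p : PolyMap d m) (w : Word m) : Tens d := MpRev p w.reverse

/-- The linear map `M_p : T(ℝ^m) → T(ℝ^d)`. -/
def Mp (p : PolyMap d m) (x : Tens m) : Tens d := x.sum fun w a => a • MpWord p w

/-- `X : [0,L] → ℝ^d` is piecewise continuously differentiable: there is a partition
`0 = t₀ ≤ t₁ ≤ ⋯ ≤ t_n = L` such that `X` is `C¹` on each subinterval. -/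
def PiecewiseC1 (X : ℝ → Fin d → ℝ) (L : ℝ) : Prop :=
  ∃ (n : ℕ) (t : Fin (n + 1) → ℝ), Monotone t ∧ t 0 = 0 ∧ t (Fin.last n) = L ∧
    ∀ k : Fin n, ContDiffOn ℝ 1 X (Set.Icc (t k.castSucc) (t k.succ))

/-- Iterated-integral signature coefficients, on reversed words:
`⟨σ(X|_{[0,t]}), w∘i⟩ = ∫_0^t ⟨σ(X|_{[0,r]}), w⟩ Ẋ^i_r dr`. -/
def sigRev (X : ℝ → Fin d → ℝ) : List (Fin d) → ℝ → ℝ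
  | [], _ => 1
  | i :: w, t => ∫ r in (0:ℝ)..t, sigRev X w r * deriv (fun u => X u i) r

/-- `⟨σ(X|_{[0,L]}), w⟩`, the signature coefficient of the word `w`. -/
def sigWord (X : ℝ → Fin d → ℝ) (L : ℝ) (w : Word d) : ℝ := sigRev X w.reverse L

/-- The pairing `⟨σ(X|_{[0,L]}), x⟩` for `x ∈ T(ℝ^d)`. -/
def sigT (X : ℝ → Fin d → ℝ) (L : ℝ) (x : Tens d) : ℝ :=
  x.sum fun w a => a * sigWord X L w

/-- The transformed path `p(X) : t ↦ p(X(t))`. -/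
def pPath (p : PolyMap d m) (X : ℝ → Fin d → ℝ) : ℝ → Fin m → ℝ :=
  fun t i => MvPolynomial.eval (X t) (p i)

/-- The translated polynomial map `p̃(y) = p(y + x₀) − p(x₀)`, satisfying `p̃(0) = 0`. -/
def ptilde (p : PolyMap d m) (x0 : Fin d → ℝ) : PolyMap d m := fun i =>
  MvPolynomial.aeval (fun j => MvPolynomial.X j + MvPolynomial.C (x0 j)) (p i) -
    MvPolynomial.C (MvPolynomial.eval x0 (p i))

/-- The pairing `⟨exp_∘(L·𝟙), x⟩` for `x ∈ T(ℝ¹)`: the coefficient of the word of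
length `n` in `exp_∘(L·𝟙)` is `Lⁿ/n!`. -/
def expPair (L : ℝ) (x : Tens 1) : ℝ :=
  x.sum fun w a => a * (L ^ w.length / (w.length.factorial : ℝ))

/-- The pairing `⟨σ(X) ∘ σ(Y), x⟩` of the concatenation product of two signatures with
`x ∈ T(ℝ^d)`: on a word `w` it is `Σ_{u∘v = w} ⟨σ(X), u⟩·⟨σ(Y), v⟩`. -/
def concatPair (X Y : ℝ → Fin d → ℝ) (L : ℝ) (x : Tens d) : ℝ :=
  x.sum fun w a =>
    a * ∑ k ∈ Finset.range (w.length + 1), sigWord X L (w.take k) * sigWord Y L (w.drop k)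


/-! ### Auxiliary infrastructure -/

open Finsupp in
lemma shuffleWord_nil_left (v : Word d) : shuffleWord [] v = Finsupp.single v 1 := by
  cases v <;> rw [shuffleWord]

lemma shuffleWord_nil_right (u : Word d) : shuffleWord u [] = Finsupp.single u 1 := by
  cases u with
  | nil => rw [shuffleWord]
  | cons a u => rw [shuffleWord]; simp

/-- Prepending a letter, as an operation on `Tens d`. -/
def consT (a : Fin d) (x : Tens d) : Tens d := Finsupp.mapDomain (fun w => a :: w) x

lemma shuffleWord_cons_cons (a b : Fin d) (u v : Word d) :
    shuffleWord (a :: u) (b :: v) =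
      consT a (shuffleWord u (b :: v)) + consT b (shuffleWord (a :: u) v) := by
  rw [shuffleWord]; rfl

/-- The shuffle product as a bilinear map. -/
def shuffleLin : Tens d →ₗ[ℝ] Tens d →ₗ[ℝ] Tens d :=
  Finsupp.lsum ℝ fun u => LinearMap.toSpanSingleton ℝ _
    (Finsupp.lsum ℝ fun v => LinearMap.toSpanSingleton ℝ _ (shuffleWord u v))

lemma shuffle_eq (x y : Tens d) : shuffle x y = shuffleLin x y := by
  rw [shuffle, shuffleLin, Finsupp.lsum_apply, Finsupp.sum, Finsupp.sum, LinearMap.sum_apply]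
  refine Finset.sum_congr rfl fun u _ => ?_
  simp only [LinearMap.toSpanSingleton_apply, LinearMap.smul_apply, Finsupp.lsum_apply]
  rw [Finsupp.smul_sum]
  refine Finsupp.sum_congr fun v _ => ?_
  simp [LinearMap.toSpanSingleton_apply, smul_smul]

lemma shuffle_zero_left (y : Tens d) : shuffle 0 y = 0 := by simp [shuffle_eq]
lemma shuffle_zero_right (x : Tens d) : shuffle x 0 = 0 := by simp [shuffle_eq]
lemma shuffle_add_left (x x' y : Tens d) :
    shuffle (x + x') y = shuffle x y + shuffle x' y := by simp [shuffle_eq]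
lemma shuffle_add_right (x y y' : Tens d) :
    shuffle x (y + y') = shuffle x y + shuffle x y' := by simp [shuffle_eq]
lemma shuffle_smul_left (c : ℝ) (x y : Tens d) :
    shuffle (c • x) y = c • shuffle x y := by simp [shuffle_eq]
lemma shuffle_smul_right (c : ℝ) (x y : Tens d) :
    shuffle x (c • y) = c • shuffle x y := by simp [shuffle_eq]

lemma shuffle_single_single (u v : Word d) (a b : ℝ) :
    shuffle (Finsupp.single u a) (Finsupp.single v b) = (a * b) • shuffleWord u v := by
  rw [shuffle_eq, shuffleLin]
  simp [LinearMap.toSpanSingleton_apply, smul_smul]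

lemma shuffle_wordT (u v : Word d) : shuffle (wordT u) (wordT v) = shuffleWord u v := by
  rw [wordT, wordT, shuffle_single_single]; simp

lemma consT_zero (a : Fin d) : consT a (0 : Tens d) = 0 := Finsupp.mapDomain_zero
lemma consT_add (a : Fin d) (x y : Tens d) : consT a (x + y) = consT a x + consT a y :=
  Finsupp.mapDomain_add
lemma consT_smul (a : Fin d) (c : ℝ) (x : Tens d) : consT a (c • x) = c • consT a x :=
  Finsupp.mapDomain_smul c x
lemma consT_single (a : Fin d) (w : Word d) (c : ℝ) :
    consT a (Finsupp.single w c) = Finsupp.single (a :: w) c := Finsupp.mapDomain_single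

lemma appendLetter_zero (a : Fin d) : appendLetter a (0 : Tens d) = 0 := Finsupp.mapDomain_zero
lemma appendLetter_add (a : Fin d) (x y : Tens d) :
    appendLetter a (x + y) = appendLetter a x + appendLetter a y := Finsupp.mapDomain_add
lemma appendLetter_smul (a : Fin d) (c : ℝ) (x : Tens d) :
    appendLetter a (c • x) = c • appendLetter a x := Finsupp.mapDomain_smul c x
lemma appendLetter_single (a : Fin d) (w : Word d) (c : ℝ) :
    appendLetter a (Finsupp.single w c) = Finsupp.single (w ++ [a]) c := Finsupp.mapDomain_single

lemma consT_appendLetter (c a : Fin d) (x : Tens d) :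
    consT c (appendLetter a x) = appendLetter a (consT c x) := by
  rw [consT, appendLetter, ← Finsupp.mapDomain_comp, consT, appendLetter, ← Finsupp.mapDomain_comp]
  rfl

/-- The empty word is the unit for the shuffle product. -/
lemma shuffle_empty_left (y : Tens d) : shuffle (Finsupp.single [] 1) y = y := by
  rw [shuffle]
  rw [Finsupp.sum_single_index (by simp)]
  have : ∀ v (b : ℝ), ((1:ℝ) * b) • shuffleWord ([] : Word d) v = Finsupp.single v b := by
    intro v b; rw [shuffleWord_nil_left]; simp [Finsupp.smul_single]
  rw [Finsupp.sum_congr fun v _ => this v (y v)]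
  exact Finsupp.sum_single y

lemma shuffle_empty_right (x : Tens d) : shuffle x (Finsupp.single [] 1) = x := by
  rw [shuffle]
  have : ∀ u (a : ℝ), (Finsupp.sum (Finsupp.single ([] : Word d) (1:ℝ)) fun v b => (a * b) • shuffleWord u v)
      = Finsupp.single u a := by
    intro u a
    rw [Finsupp.sum_single_index (by simp), shuffleWord_nil_right]
    simp [Finsupp.smul_single]
  rw [Finsupp.sum_congr fun u _ => this u (x u)]
  exact Finsupp.sum_single x

/-- Head-recursion for the shuffle, bilinearly. -/
lemma shuffle_consT_consT (a b : Fin d) (x y : Tens d) :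
    shuffle (consT a x) (consT b y) =
      consT a (shuffle x (consT b y)) + consT b (shuffle (consT a x) y) := by
  induction x using Finsupp.induction_linear with
  | zero => simp [consT_zero, shuffle_zero_left, shuffle_zero_right]
  | add f g hf hg =>
      simp only [consT_add, shuffle_add_left, shuffle_add_right, hf, hg]; abel
  | single u c =>
    induction y using Finsupp.induction_linear with
    | zero => simp [consT_zero, shuffle_zero_left, shuffle_zero_right]
    | add f g hf hg =>
        simp only [consT_add, shuffle_add_left, shuffle_add_right, hf, hg]; abel
    | single v e =>
        simp only [consT_single, shuffle_single_single, shuffleWord_cons_cons, smul_add,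
          consT_smul]

/-- Last-letter recursion for the shuffle of words. -/
lemma shuffleWord_concat_concat : ∀ (n : ℕ) (u v : Word d) (a b : Fin d),
    u.length + v.length ≤ n →
    shuffleWord (u ++ [a]) (v ++ [b]) =
      appendLetter a (shuffleWord u (v ++ [b])) + appendLetter b (shuffleWord (u ++ [a]) v) := by
  intro n
  induction n with
  | zero =>
    intro u v a b h
    obtain ⟨hu, hv⟩ : u = [] ∧ v = [] := by
      constructor <;> [exact List.length_eq_zero_iff.mp (by omega); exact List.length_eq_zero_iff.mp (by omega)]
    subst hu; subst hv
    simp only [List.nil_append, shuffleWord_cons_cons, shuffleWord_nil_left, shuffleWord_nil_right,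
      consT_add, consT_single, appendLetter_add, appendLetter_single, consT_appendLetter,
      List.cons_append, List.singleton_append, List.append_assoc]
    abel
  | succ n ih =>
    intro u v a b h
    match u, v with
    | [], [] =>
      simp only [List.nil_append, shuffleWord_cons_cons, shuffleWord_nil_left,
        shuffleWord_nil_right, consT_add, consT_single, appendLetter_add, appendLetter_single,
        consT_appendLetter, List.cons_append, List.singleton_append, List.append_assoc]
      abel
    | [], c :: v' =>
      have IH := ih [] v' a b (by simp at h ⊢; omega)
      simp only [List.cons_append, List.nil_append] at IH ⊢
      rw [shuffleWord_cons_cons, IH]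
      simp only [shuffleWord_cons_cons, shuffleWord_nil_left, shuffleWord_nil_right, consT_add,
        consT_single, appendLetter_add, appendLetter_single, consT_appendLetter,
        List.cons_append, List.nil_append, List.singleton_append, List.append_assoc]
      abel
    | c :: u', [] =>
      have IH := ih u' [] a b (by simp at h ⊢; omega)
      simp only [List.cons_append, List.nil_append] at IH ⊢
      rw [shuffleWord_cons_cons, IH]
      simp only [shuffleWord_cons_cons, shuffleWord_nil_left, shuffleWord_nil_right, consT_add,
        consT_single, appendLetter_add, appendLetter_single, consT_appendLetter,
        List.cons_append, List.nil_append, List.singleton_append, List.append_assoc]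
      abel
    | c :: u', e :: v' =>
      have IH1 := ih u' (e :: v') a b (by simp at h ⊢; omega)
      have IH2 := ih (c :: u') v' a b (by simp at h ⊢; omega)
      simp only [List.cons_append, List.nil_append] at IH1 IH2 ⊢
      rw [shuffleWord_cons_cons, IH1, IH2]
      conv_rhs => rw [shuffleWord_cons_cons, shuffleWord_cons_cons]
      simp only [consT_add, appendLetter_add, consT_appendLetter]
      abel

lemma shuffleWord_comm : ∀ (n : ℕ) (u v : Word d), u.length + v.length ≤ n →
    shuffleWord u v = shuffleWord v u := by
  intro n
  induction n with
  | zero =>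
    intro u v h
    obtain ⟨hu, hv⟩ : u = [] ∧ v = [] := by
      constructor <;> exact List.length_eq_zero_iff.mp (by omega)
    subst hu; subst hv; rfl
  | succ n ih =>
    intro u v h
    match u, v with
    | [], v => rw [shuffleWord_nil_left, shuffleWord_nil_right]
    | u, [] => rw [shuffleWord_nil_left, shuffleWord_nil_right]
    | a :: u', b :: v' =>
      rw [shuffleWord_cons_cons, shuffleWord_cons_cons,
        ih u' (b :: v') (by simp at h ⊢; omega), ih (a :: u') v' (by simp at h ⊢; omega),
        add_comm]

lemma shuffle_comm (x y : Tens d) : shuffle x y = shuffle y x := by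
  induction x using Finsupp.induction_linear with
  | zero => simp [shuffle_zero_left, shuffle_zero_right]
  | add f g hf hg => rw [shuffle_add_left, shuffle_add_right, hf, hg]
  | single u c =>
    induction y using Finsupp.induction_linear with
    | zero => simp [shuffle_zero_left, shuffle_zero_right]
    | add f g hf hg => rw [shuffle_add_left, shuffle_add_right, hf, hg]
    | single v e =>
      rw [shuffle_single_single, shuffle_single_single, mul_comm,
        shuffleWord_comm (u.length + v.length) u v le_rfl]

/-- Associativity of the shuffle product, word version. -/
lemma shuffle_shuffleWord_assoc : ∀ (n : ℕ) (u v w : Word d),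
    u.length + v.length + w.length ≤ n →
    shuffle (shuffleWord u v) (wordT w) = shuffle (wordT u) (shuffleWord v w) := by
  intro n
  induction n with
  | zero =>
    intro u v w h
    obtain ⟨hu, hv, hw⟩ : u = [] ∧ v = [] ∧ w = [] := by
      refine ⟨?_, ?_, ?_⟩ <;> exact List.length_eq_zero_iff.mp (by omega)
    subst hu; subst hv; subst hw
    simp [shuffleWord_nil_left, wordT]
  | succ n ih =>
    intro u v w h
    match u, v, w with
    | [], v, w =>
      rw [shuffleWord_nil_left,
        show (Finsupp.single v (1:ℝ)) = wordT v from rfl, shuffle_wordT,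
        show wordT ([] : Word d) = Finsupp.single [] 1 from rfl, shuffle_empty_left]
    | u, [], w =>
      rw [shuffleWord_nil_right, shuffleWord_nil_left]
      rfl
    | u, v, [] =>
      rw [shuffleWord_nil_right,
        show wordT ([] : Word d) = Finsupp.single [] 1 from rfl, shuffle_empty_right,
        show (Finsupp.single v (1:ℝ)) = wordT v from rfl, shuffle_wordT]
    | a :: u₁, b :: v₁, c :: w₁ =>
      have ih1 := ih u₁ (b :: v₁) (c :: w₁) (by simp at h ⊢; omega)
      have ih2 := ih (a :: u₁) v₁ (c :: w₁) (by simp at h ⊢; omega)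
      have ih3 := ih (a :: u₁) (b :: v₁) w₁ (by simp at h ⊢; omega)
      have e1 : wordT (c :: w₁) = consT c (wordT w₁) := (consT_single c w₁ 1).symm
      have e2 : wordT (a :: u₁) = consT a (wordT u₁) := (consT_single a u₁ 1).symm
      calc shuffle (shuffleWord (a :: u₁) (b :: v₁)) (wordT (c :: w₁))
          = shuffle (consT a (shuffleWord u₁ (b :: v₁))) (consT c (wordT w₁)) +
            shuffle (consT b (shuffleWord (a :: u₁) v₁)) (consT c (wordT w₁)) := by
            rw [shuffleWord_cons_cons, shuffle_add_left, e1]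
        _ = consT a (shuffle (shuffleWord u₁ (b :: v₁)) (wordT (c :: w₁))) +
            consT b (shuffle (shuffleWord (a :: u₁) v₁) (wordT (c :: w₁))) +
            consT c (shuffle (shuffleWord (a :: u₁) (b :: v₁)) (wordT w₁)) := by
            rw [shuffle_consT_consT, shuffle_consT_consT, ← e1, shuffleWord_cons_cons a b u₁ v₁,
              shuffle_add_left, consT_add]
            abel
        _ = consT a (shuffle (wordT u₁) (shuffleWord (b :: v₁) (c :: w₁))) +
            consT b (shuffle (wordT (a :: u₁)) (shuffleWord v₁ (c :: w₁))) +
            consT c (shuffle (wordT (a :: u₁)) (shuffleWord (b :: v₁) w₁)) := by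
            rw [ih1, ih2, ih3]
        _ = (consT a (shuffle (wordT u₁) (consT b (shuffleWord v₁ (c :: w₁)))) +
             consT a (shuffle (wordT u₁) (consT c (shuffleWord (b :: v₁) w₁)))) +
            consT b (shuffle (wordT (a :: u₁)) (shuffleWord v₁ (c :: w₁))) +
            consT c (shuffle (wordT (a :: u₁)) (shuffleWord (b :: v₁) w₁)) := by
            rw [shuffleWord_cons_cons b c v₁ w₁, shuffle_add_right, consT_add]
        _ = (consT a (shuffle (wordT u₁) (consT b (shuffleWord v₁ (c :: w₁)))) +
             consT b (shuffle (consT a (wordT u₁)) (shuffleWord v₁ (c :: w₁)))) +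
            (consT a (shuffle (wordT u₁) (consT c (shuffleWord (b :: v₁) w₁))) +
             consT c (shuffle (consT a (wordT u₁)) (shuffleWord (b :: v₁) w₁))) := by
            rw [← e2]; abel
        _ = shuffle (consT a (wordT u₁)) (consT b (shuffleWord v₁ (c :: w₁))) +
            shuffle (consT a (wordT u₁)) (consT c (shuffleWord (b :: v₁) w₁)) := by
            rw [shuffle_consT_consT a b (wordT u₁) (shuffleWord v₁ (c :: w₁)),
              shuffle_consT_consT a c (wordT u₁) (shuffleWord (b :: v₁) w₁)]
        _ = shuffle (wordT (a :: u₁)) (shuffleWord (b :: v₁) (c :: w₁)) := by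
            rw [← e2, ← shuffle_add_right, ← shuffleWord_cons_cons]

lemma shuffle_assoc (x y z : Tens d) :
    shuffle (shuffle x y) z = shuffle x (shuffle y z) := by
  induction x using Finsupp.induction_linear with
  | zero => simp [shuffle_zero_left, shuffle_zero_right]
  | add f g hf hg => rw [shuffle_add_left, shuffle_add_left, shuffle_add_left, hf, hg]
  | single u a =>
    induction y using Finsupp.induction_linear with
    | zero => simp [shuffle_zero_left, shuffle_zero_right]
    | add f g hf hg =>
        rw [shuffle_add_right, shuffle_add_left, shuffle_add_left, shuffle_add_right, hf, hg]
    | single v b =>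
      induction z using Finsupp.induction_linear with
      | zero => simp [shuffle_zero_left, shuffle_zero_right]
      | add f g hf hg =>
          rw [shuffle_add_right, shuffle_add_right, shuffle_add_right, hf, hg]
      | single w c =>
        have h1 : Finsupp.single u a = a • wordT u := by rw [wordT, Finsupp.smul_single, smul_eq_mul, mul_one]
        have h2 : Finsupp.single v b = b • wordT v := by rw [wordT, Finsupp.smul_single, smul_eq_mul, mul_one]
        have h3 : Finsupp.single w c = c • wordT w := by rw [wordT, Finsupp.smul_single, smul_eq_mul, mul_one]
        rw [h1, h2, h3]
        simp only [shuffle_smul_left, shuffle_smul_right, shuffle_wordT]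
        rw [shuffle_shuffleWord_assoc (u.length + v.length + w.length) u v w le_rfl]

lemma shuffle_sum_right {α : Type*} (x : Tens d) (s : Finset α) (f : α → Tens d) :
    shuffle x (∑ j ∈ s, f j) = ∑ j ∈ s, shuffle x (f j) := by
  classical
  induction s using Finset.induction_on with
  | empty => simp [shuffle_zero_right]
  | insert _ _ h ihs => rw [Finset.sum_insert h, Finset.sum_insert h, shuffle_add_right, ihs]

lemma shuffle_sum_left {α : Type*} (y : Tens d) (s : Finset α) (f : α → Tens d) :
    shuffle (∑ j ∈ s, f j) y = ∑ j ∈ s, shuffle (f j) y := by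
  classical
  induction s using Finset.induction_on with
  | empty => simp [shuffle_zero_left]
  | insert _ _ h ihs => rw [Finset.sum_insert h, Finset.sum_insert h, shuffle_add_left, ihs]

lemma appendLetter_sum {α : Type*} (i : Fin d) (s : Finset α) (f : α → Tens d) :
    appendLetter i (∑ j ∈ s, f j) = ∑ j ∈ s, appendLetter i (f j) := by
  classical
  induction s using Finset.induction_on with
  | empty => simp [appendLetter_zero]
  | insert _ _ h ihs => rw [Finset.sum_insert h, Finset.sum_insert h, appendLetter_add, ihs]

lemma shuffle_right_comm (x y z : Tens d) :
    shuffle (shuffle x y) z = shuffle (shuffle x z) y := by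
  rw [shuffle_assoc, shuffle_comm y z, ← shuffle_assoc]

/-- Last-letter recursion for the shuffle, bilinearly (Tens level). -/
lemma shuffle_append_append (a b : Fin d) (x y : Tens d) :
    shuffle (appendLetter a x) (appendLetter b y) =
      appendLetter a (shuffle x (appendLetter b y)) +
        appendLetter b (shuffle (appendLetter a x) y) := by
  induction x using Finsupp.induction_linear with
  | zero => simp [appendLetter_zero, shuffle_zero_left, shuffle_zero_right]
  | add f g hf hg =>
      simp only [appendLetter_add, shuffle_add_left, shuffle_add_right, hf, hg]; abel
  | single u c =>
    induction y using Finsupp.induction_linear with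
    | zero => simp [appendLetter_zero, shuffle_zero_left, shuffle_zero_right]
    | add f g hf hg =>
        simp only [appendLetter_add, shuffle_add_left, shuffle_add_right, hf, hg]; abel
    | single v e =>
        simp only [appendLetter_single, shuffle_single_single,
          shuffleWord_concat_concat (u.length + v.length) u v a b le_rfl, smul_add,
          appendLetter_smul]

lemma letterT_eq_append (i : Fin d) :
    letterT i = appendLetter i (Finsupp.single [] 1) := by
  rw [letterT, appendLetter, Finsupp.mapDomain_single]; rfl

/-- Shuffling with a letter on the right. -/
lemma shuffle_appendLetter_letterT (j i : Fin d) (x : Tens d) :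
    shuffle (appendLetter j x) (letterT i) =
      appendLetter j (shuffle x (letterT i)) + appendLetter i (appendLetter j x) := by
  rw [letterT_eq_append, shuffle_append_append, shuffle_empty_right, ← letterT_eq_append]

/-! ### Lemmas about `phi` -/

lemma phi_def (f : MvPolynomial (Fin d) ℝ) :
    phi f = f.support.sum fun t => f.coeff t • phiMon t := rfl

lemma phi_eq_sum_of_subset (f : MvPolynomial (Fin d) ℝ) (s : Finset (Fin d →₀ ℕ))
    (hs : f.support ⊆ s) : phi f = s.sum fun t => f.coeff t • phiMon t := by
  rw [phi_def]
  refine Finset.sum_subset hs fun t _ ht => ?_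
  rw [MvPolynomial.notMem_support_iff.mp ht, zero_smul]

lemma phi_zero : phi (0 : MvPolynomial (Fin d) ℝ) = 0 := by
  rw [phi_def]; simp

lemma phi_add (f g : MvPolynomial (Fin d) ℝ) : phi (f + g) = phi f + phi g := by
  classical
  rw [phi_eq_sum_of_subset (f + g) (f.support ∪ g.support)
      (MvPolynomial.support_add (p := f) (q := g)),
    phi_eq_sum_of_subset f (f.support ∪ g.support) Finset.subset_union_left,
    phi_eq_sum_of_subset g (f.support ∪ g.support) Finset.subset_union_right,
    ← Finset.sum_add_distrib]
  refine Finset.sum_congr rfl fun t _ => ?_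
  rw [MvPolynomial.coeff_add, add_smul]

lemma phi_smul (c : ℝ) (f : MvPolynomial (Fin d) ℝ) : phi (c • f) = c • phi f := by
  rw [phi_eq_sum_of_subset (c • f) f.support MvPolynomial.support_smul, phi_def,
    Finset.smul_sum]
  refine Finset.sum_congr rfl fun t _ => ?_
  rw [MvPolynomial.coeff_smul, smul_smul, smul_eq_mul]

lemma phi_monomial (t : Fin d →₀ ℕ) (c : ℝ) :
    phi (MvPolynomial.monomial t c) = c • phiMon t := by
  classical
  by_cases hc : c = 0
  · subst hc; simp [phi_zero]
  · rw [phi_def, MvPolynomial.support_monomial, if_neg hc, Finset.sum_singleton,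
      MvPolynomial.coeff_monomial, if_pos rfl]

lemma shuffleList_all_empty : ∀ l : List (Tens d),
    (∀ x ∈ l, x = Finsupp.single [] 1) → shuffleList l = Finsupp.single [] 1 := by
  intro l
  induction l with
  | nil => intro _; rfl
  | cons x xs ihl =>
    intro hx
    rw [shuffleList, hx x List.mem_cons_self, ihl fun y hy => hx y (List.mem_cons_of_mem _ hy),
      shuffle_empty_left]

lemma phiMon_zero : phiMon (0 : Fin d →₀ ℕ) = Finsupp.single [] 1 := by
  rw [phiMon]
  refine shuffleList_all_empty _ fun x hx => ?_
  simp only [List.mem_map] at hx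
  obtain ⟨i, _, rfl⟩ := hx
  simp [shufflePow]

lemma phi_C (a : ℝ) : phi (MvPolynomial.C a : MvPolynomial (Fin d) ℝ) = a • Finsupp.single [] 1 := by
  rw [show (MvPolynomial.C a : MvPolynomial (Fin d) ℝ) = MvPolynomial.monomial 0 a from rfl,
    phi_monomial, phiMon_zero]

lemma phi_one : phi (1 : MvPolynomial (Fin d) ℝ) = Finsupp.single [] 1 := by
  rw [show (1 : MvPolynomial (Fin d) ℝ) = MvPolynomial.C 1 from rfl, phi_C, one_smul]

lemma shuffleList_map_update (f : Fin d → Tens d) (y : Tens d) (i : Fin d) :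
    ∀ l : List (Fin d), l.Nodup → i ∈ l →
    shuffleList (l.map (Function.update f i (shuffle (f i) y))) =
      shuffle (shuffleList (l.map f)) y := by
  intro l
  induction l with
  | nil => intro _ h; exact absurd h List.not_mem_nil
  | cons a xs ihl =>
    intro hnd hmem
    by_cases hai : a = i
    · subst hai
      have hnin : a ∉ xs := (List.nodup_cons.mp hnd).1
      have : xs.map (Function.update f a (shuffle (f a) y)) = xs.map f := by
        refine List.map_congr_left fun x hx => ?_
        exact Function.update_of_ne (fun hxa => hnin (by rw [← hxa]; exact hx)) _ f
      rw [List.map_cons, List.map_cons, shuffleList, shuffleList, this,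
        Function.update_self]
      rw [shuffle_assoc, shuffle_comm y _, ← shuffle_assoc]
    · have hmem' : i ∈ xs := by
        rcases List.mem_cons.mp hmem with h | h
        · exact absurd h.symm hai
        · exact h
      rw [List.map_cons, List.map_cons, shuffleList, shuffleList,
        Function.update_of_ne hai _ f, ihl (List.nodup_cons.mp hnd).2 hmem',
        ← shuffle_assoc]

lemma phiMon_add_single (t : Fin d →₀ ℕ) (i : Fin d) :
    phiMon (t + Finsupp.single i 1) = shuffle (phiMon t) (letterT i) := by
  classical
  have key : (fun j => shufflePow (letterT j) ((t + Finsupp.single i 1 : Fin d →₀ ℕ) j)) =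
      Function.update (fun j => shufflePow (letterT j) (t j)) i
        (shuffle (shufflePow (letterT i) (t i)) (letterT i)) := by
    funext j
    by_cases hj : j = i
    · subst hj
      rw [Function.update_self, Finsupp.add_apply, Finsupp.single_eq_same]
      rfl
    · rw [Function.update_of_ne hj, Finsupp.add_apply,
        Finsupp.single_eq_of_ne hj, add_zero]
  rw [phiMon, phiMon, key]
  exact shuffleList_map_update _ (letterT i) i (List.finRange d) (List.nodup_finRange d)
    (List.mem_finRange i)

lemma phi_mul_X (f : MvPolynomial (Fin d) ℝ) (i : Fin d) :
    phi (f * MvPolynomial.X i) = shuffle (phi f) (letterT i) := by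
  induction f using MvPolynomial.induction_on' with
  | monomial t c =>
    rw [show (MvPolynomial.X i : MvPolynomial (Fin d) ℝ)
        = MvPolynomial.monomial (Finsupp.single i 1) 1 from rfl, MvPolynomial.monomial_mul,
      phi_monomial, phi_monomial, mul_one, phiMon_add_single, shuffle_smul_left]
  | add f g hf hg =>
    rw [add_mul, phi_add, phi_add, hf, hg, shuffle_add_left]

lemma phi_mul (f g : MvPolynomial (Fin d) ℝ) : phi (f * g) = shuffle (phi f) (phi g) := by
  induction g using MvPolynomial.induction_on with
  | C a =>
    rw [phi_C, shuffle_smul_right, shuffle_empty_right, mul_comm,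
      ← MvPolynomial.smul_eq_C_mul, phi_smul]
  | add g₁ g₂ h₁ h₂ =>
    rw [mul_add, phi_add, phi_add, h₁, h₂, shuffle_add_right]
  | mul_X g i hg =>
    rw [← mul_assoc, phi_mul_X, phi_mul_X, hg, shuffle_assoc]

/-- The key structural identity: `φ(f) = f(0)·e + Σ_j T_j^+ φ(∂_j f)`. -/
lemma phi_structure (f : MvPolynomial (Fin d) ℝ) :
    phi f = MvPolynomial.constantCoeff f • Finsupp.single [] 1 +
      ∑ j : Fin d, appendLetter j (phi (MvPolynomial.pderiv j f)) := by
  classical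
  induction f using MvPolynomial.induction_on with
  | C a =>
    rw [phi_C]
    simp [MvPolynomial.pderiv_C, phi_zero, appendLetter_zero, MvPolynomial.constantCoeff_C]
  | add f g hf hg =>
    rw [phi_add]
    conv_lhs => rw [hf, hg]
    simp only [map_add, phi_add, appendLetter_add, Finset.sum_add_distrib, add_smul]
    abel
  | mul_X f i hf =>
    have hc : MvPolynomial.constantCoeff (f * MvPolynomial.X i) = 0 := by
      rw [map_mul, MvPolynomial.constantCoeff_X, mul_zero]
    have hterm : ∀ j : Fin d, phi (MvPolynomial.pderiv j (f * MvPolynomial.X i)) =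
        shuffle (phi (MvPolynomial.pderiv j f)) (letterT i) +
          (if j = i then phi f else 0) := by
      intro j
      rw [MvPolynomial.pderiv_mul, phi_add, phi_mul_X, MvPolynomial.pderiv_X]
      congr 1
      by_cases hji : j = i
      · subst hji; rw [Pi.single_eq_same, mul_one, if_pos rfl]
      · rw [Pi.single_eq_of_ne (Ne.symm hji), mul_zero, phi_zero, if_neg hji]
    rw [phi_mul_X, hc, zero_smul, zero_add]
    conv_lhs => rw [hf]
    rw [shuffle_add_left, shuffle_smul_left, shuffle_empty_left, shuffle_sum_left]
    rw [Finset.sum_congr rfl fun j _ =>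
      shuffle_appendLetter_letterT j i (phi (MvPolynomial.pderiv j f))]
    rw [Finset.sum_add_distrib, ← appendLetter_sum]
    have hterm' : ∀ j ∈ Finset.univ,
        appendLetter j (phi (MvPolynomial.pderiv j (f * MvPolynomial.X i))) =
          appendLetter j (shuffle (phi (MvPolynomial.pderiv j f)) (letterT i)) +
            (if j = i then appendLetter j (phi f) else 0) := by
      intro j _
      rw [hterm j, appendLetter_add]
      congr 1
      split_ifs with h
      · rfl
      · exact appendLetter_zero j
    rw [Finset.sum_congr rfl hterm', Finset.sum_add_distrib,
      Finset.sum_ite_eq' Finset.univ i (fun j => appendLetter j (phi f)),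
      if_pos (Finset.mem_univ i)]
    conv_rhs => rw [hf]
    rw [appendLetter_add, appendLetter_smul, ← letterT_eq_append]
    abel

/-! ### Lemmas about `Mp` -/

variable {p : PolyMap d m}

/-- The linear extension of `MpRev`. -/
def MpE (p : PolyMap d m) : Tens m →ₗ[ℝ] Tens d :=
  Finsupp.lsum ℝ fun w => LinearMap.toSpanSingleton ℝ _ (MpRev p w)

lemma MpE_single (w : Word m) (c : ℝ) :
    MpE p (Finsupp.single w c) = c • MpRev p w := by
  rw [MpE, Finsupp.lsum_single, LinearMap.toSpanSingleton_apply]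

lemma Mp_eq (x : Tens m) : Mp p x = MpE p (Finsupp.mapDomain List.reverse x) := by
  rw [Mp, MpE, Finsupp.lsum_apply,
    Finsupp.sum_mapDomain_index_inj (fun u v h => List.reverse_injective h)]
  rfl

lemma Mp_single (w : Word m) (c : ℝ) : Mp p (Finsupp.single w c) = c • MpRev p w.reverse := by
  rw [Mp_eq, Finsupp.mapDomain_single, MpE_single]

/-- `MpE` on `consT`. -/
lemma MpE_consT (i : Fin m) (x : Tens m) :
    MpE p (consT i x) = ∑ j : Fin d, appendLetter j (shuffle (MpE p x) (kP p i j)) := by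
  induction x using Finsupp.induction_linear with
  | zero => simp [consT_zero, map_zero, shuffle_zero_left, appendLetter_zero]
  | add f g hf hg =>
    rw [consT_add, map_add, hf, hg, map_add, ← Finset.sum_add_distrib]
    refine Finset.sum_congr rfl fun j _ => ?_
    rw [shuffle_add_left, appendLetter_add]
  | single w c =>
    rw [consT_single, MpE_single, MpE_single, MpRev]
    rw [Finset.smul_sum]
    refine Finset.sum_congr rfl fun j _ => ?_
    rw [← appendLetter_smul, ← shuffle_smul_left]

lemma mapDomain_reverse_consT (a : Fin d) (x : Tens d) :
    Finsupp.mapDomain List.reverse (consT a x) =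
      appendLetter a (Finsupp.mapDomain List.reverse x) := by
  rw [consT, appendLetter, ← Finsupp.mapDomain_comp, ← Finsupp.mapDomain_comp]
  congr 1
  funext w
  simp [List.reverse_cons]

lemma mapDomain_reverse_shuffleWord : ∀ (n : ℕ) (u v : Word d), u.length + v.length ≤ n →
    Finsupp.mapDomain List.reverse (shuffleWord u v) = shuffleWord u.reverse v.reverse := by
  intro n
  induction n with
  | zero =>
    intro u v h
    obtain ⟨hu, hv⟩ : u = [] ∧ v = [] := by
      constructor <;> exact List.length_eq_zero_iff.mp (by omega)
    subst hu; subst hv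
    rw [shuffleWord_nil_left, Finsupp.mapDomain_single]
    simp [shuffleWord_nil_left]
  | succ n ih =>
    intro u v h
    match u, v with
    | [], v => rw [shuffleWord_nil_left, Finsupp.mapDomain_single, List.reverse_nil,
        shuffleWord_nil_left]
    | u, [] => rw [shuffleWord_nil_right, Finsupp.mapDomain_single, List.reverse_nil,
        shuffleWord_nil_right]
    | a :: u', b :: v' =>
      rw [shuffleWord_cons_cons, Finsupp.mapDomain_add, mapDomain_reverse_consT,
        mapDomain_reverse_consT, ih u' (b :: v') (by simp at h ⊢; omega),
        ih (a :: u') v' (by simp at h ⊢; omega), List.reverse_cons, List.reverse_cons,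
        shuffleWord_concat_concat (u'.reverse.length + v'.reverse.length) u'.reverse v'.reverse
          a b le_rfl, ← List.reverse_cons, ← List.reverse_cons]

lemma mapDomain_reverse_shuffle (x y : Tens d) :
    Finsupp.mapDomain List.reverse (shuffle x y) =
      shuffle (Finsupp.mapDomain List.reverse x) (Finsupp.mapDomain List.reverse y) := by
  induction x using Finsupp.induction_linear with
  | zero => simp [shuffle_zero_left]
  | add f g hf hg =>
    rw [shuffle_add_left, Finsupp.mapDomain_add, Finsupp.mapDomain_add, hf, hg, shuffle_add_left]
  | single u a =>
    induction y using Finsupp.induction_linear with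
    | zero => simp [shuffle_zero_right]
    | add f g hf hg =>
      rw [shuffle_add_right, Finsupp.mapDomain_add, Finsupp.mapDomain_add, hf, hg,
        shuffle_add_right]
    | single v b =>
      rw [shuffle_single_single, Finsupp.mapDomain_smul, Finsupp.mapDomain_single,
        Finsupp.mapDomain_single, shuffle_single_single,
        mapDomain_reverse_shuffleWord (u.length + v.length) u v le_rfl]

/-- `MpE` is a morphism for the shuffle product, word version. -/
lemma MpE_shuffleWord : ∀ (n : ℕ) (u v : Word m), u.length + v.length ≤ n →
    MpE p (shuffleWord u v) = shuffle (MpRev p u) (MpRev p v) := by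
  intro n
  induction n with
  | zero =>
    intro u v h
    obtain ⟨hu, hv⟩ : u = [] ∧ v = [] := by
      constructor <;> exact List.length_eq_zero_iff.mp (by omega)
    subst hu; subst hv
    rw [shuffleWord_nil_left, MpE_single, one_smul]
    show MpRev p [] = shuffle (Finsupp.single [] 1) (MpRev p [])
    rw [shuffle_empty_left]
  | succ n ih =>
    intro u v h
    match u, v with
    | [], v =>
      rw [shuffleWord_nil_left, MpE_single, one_smul]
      show MpRev p v = shuffle (Finsupp.single [] 1) (MpRev p v)
      rw [shuffle_empty_left]
    | u, [] =>
      rw [shuffleWord_nil_right, MpE_single, one_smul]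
      show MpRev p u = shuffle (MpRev p u) (Finsupp.single [] 1)
      rw [shuffle_empty_right]
    | i :: u', j :: v' =>
      have ih1 := ih u' (j :: v') (by simp at h ⊢; omega)
      have ih2 := ih (i :: u') v' (by simp at h ⊢; omega)
      have hu : MpRev p (i :: u') =
          ∑ k : Fin d, appendLetter k (shuffle (MpRev p u') (kP p i k)) := rfl
      have hv : MpRev p (j :: v') =
          ∑ l : Fin d, appendLetter l (shuffle (MpRev p v') (kP p j l)) := rfl
      have h_inner : ∀ k : Fin d,
          shuffle (appendLetter k (shuffle (MpRev p u') (kP p i k))) (MpRev p (j :: v')) =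
            appendLetter k (shuffle (shuffle (MpRev p u') (kP p i k)) (MpRev p (j :: v'))) +
              ∑ l : Fin d, appendLetter l
                (shuffle (appendLetter k (shuffle (MpRev p u') (kP p i k)))
                  (shuffle (MpRev p v') (kP p j l))) := by
        intro k
        conv_lhs => rw [hv, shuffle_sum_right]
        rw [Finset.sum_congr rfl fun l _ => shuffle_append_append k l _ _,
          Finset.sum_add_distrib, ← appendLetter_sum, ← shuffle_sum_right, ← hv]
      calc MpE p (shuffleWord (i :: u') (j :: v'))
          = (∑ k : Fin d, appendLetter k
              (shuffle (shuffle (MpRev p u') (MpRev p (j :: v'))) (kP p i k))) +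
            ∑ k : Fin d, appendLetter k
              (shuffle (shuffle (MpRev p (i :: u')) (MpRev p v')) (kP p j k)) := by
            rw [shuffleWord_cons_cons, map_add, MpE_consT, MpE_consT, ih1, ih2]
        _ = (∑ k : Fin d, appendLetter k
              (shuffle (shuffle (MpRev p u') (kP p i k)) (MpRev p (j :: v')))) +
            ∑ l : Fin d, appendLetter l
              (shuffle (MpRev p (i :: u')) (shuffle (MpRev p v') (kP p j l))) := by
            refine congrArg₂ (· + ·) (Finset.sum_congr rfl fun k _ => ?_)
              (Finset.sum_congr rfl fun l _ => ?_)
            · rw [shuffle_right_comm]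
            · rw [shuffle_assoc]
        _ = (∑ k : Fin d, appendLetter k
              (shuffle (shuffle (MpRev p u') (kP p i k)) (MpRev p (j :: v')))) +
            ∑ k : Fin d, ∑ l : Fin d, appendLetter l
              (shuffle (appendLetter k (shuffle (MpRev p u') (kP p i k)))
                (shuffle (MpRev p v') (kP p j l))) := by
            congr 1
            rw [Finset.sum_comm]
            refine Finset.sum_congr rfl fun l _ => ?_
            rw [← appendLetter_sum, ← shuffle_sum_left, ← hu]
        _ = ∑ k : Fin d, shuffle (appendLetter k (shuffle (MpRev p u') (kP p i k)))
              (MpRev p (j :: v')) := by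
            rw [Finset.sum_congr rfl fun k _ => h_inner k, Finset.sum_add_distrib]
        _ = shuffle (MpRev p (i :: u')) (MpRev p (j :: v')) := by
            rw [← shuffle_sum_left, ← hu]

lemma MpE_shuffle (x y : Tens m) :
    MpE p (shuffle x y) = shuffle (MpE p x) (MpE p y) := by
  induction x using Finsupp.induction_linear with
  | zero => simp [shuffle_zero_left, map_zero]
  | add f g hf hg => rw [shuffle_add_left, map_add, hf, hg, map_add, shuffle_add_left]
  | single u a =>
    induction y using Finsupp.induction_linear with
    | zero => simp [shuffle_zero_right, map_zero]
    | add f g hf hg => rw [shuffle_add_right, map_add, hf, hg, map_add, shuffle_add_right]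
    | single v b =>
      rw [shuffle_single_single, _root_.map_smul, MpE_shuffleWord (u.length + v.length) u v le_rfl,
        MpE_single, MpE_single, shuffle_smul_left, shuffle_smul_right, smul_smul]

lemma Mp_add (x y : Tens m) : Mp p (x + y) = Mp p x + Mp p y := by
  rw [Mp_eq, Mp_eq, Mp_eq, Finsupp.mapDomain_add, map_add]

lemma Mp_smul (c : ℝ) (x : Tens m) : Mp p (c • x) = c • Mp p x := by
  rw [Mp_eq, Mp_eq, Finsupp.mapDomain_smul, _root_.map_smul]

lemma Mp_empty : Mp p (Finsupp.single [] 1) = Finsupp.single [] 1 := by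
  rw [Mp_single, one_smul]
  rfl

lemma Mp_shuffle (x y : Tens m) :
    Mp p (shuffle x y) = shuffle (Mp p x) (Mp p y) := by
  rw [Mp_eq, Mp_eq, Mp_eq, mapDomain_reverse_shuffle, MpE_shuffle]

lemma Mp_letterT (i : Fin m) (hpi : MvPolynomial.constantCoeff (p i) = 0) :
    Mp p (letterT i) = phi (p i) := by
  rw [letterT, Mp_single, one_smul, show ([i] : Word m).reverse = [i] from rfl, MpRev,
    phi_structure (p i), hpi, zero_smul, zero_add]
  refine Finset.sum_congr rfl fun j _ => ?_
  rw [show MpRev p ([] : Word m) = Finsupp.single [] 1 from rfl, shuffle_empty_left, kP]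

/-- For polynomial maps `p : ℝ^d → ℝ^m` and `q : ℝ^m → ℝ^s` with
`p(0) = 0` and `q(0) = 0`, one has `M_p(φ_m(q_i)) = φ_d(q_i ∘ p)` for every `i`. -/
theorem Mp_phi_comp (d m s : ℕ) (p : PolyMap d m) (q : PolyMap m s)
    (hp : ∀ i, MvPolynomial.eval (0 : Fin d → ℝ) (p i) = 0)
    (hq : ∀ i, MvPolynomial.eval (0 : Fin m → ℝ) (q i) = 0) :
    ∀ i : Fin s, Mp p (phi (q i)) = phi (MvPolynomial.bind₁ p (q i)) := by
  intro i
  suffices h : ∀ f : MvPolynomial (Fin m) ℝ, Mp p (phi f) = phi (MvPolynomial.bind₁ p f) from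
    h (q i)
  intro f
  induction f using MvPolynomial.induction_on with
  | C a =>
    rw [phi_C, Mp_smul, Mp_empty, MvPolynomial.bind₁_C_right, phi_C]
  | add f g hf hg =>
    rw [phi_add, Mp_add, hf, hg, map_add, phi_add]
  | mul_X f j hf =>
    have hcc : MvPolynomial.constantCoeff (p j) = 0 := by
      rw [← MvPolynomial.eval_zero]; exact hp j
    rw [phi_mul_X, Mp_shuffle, hf, Mp_letterT j hcc, map_mul, MvPolynomial.bind₁_X_right,
      phi_mul]

end SigPaper
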